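/- A finite group G is strongly flat if and only if m(H) < m(G) for every proper subgroup H < G. -/
import Mathlib


/-- A finite subset of a group is irredundant if no element lies in the
subgroup generated by the remaining elements. -/
def Irredundant {G : Type*} [Group G] (s : Finset G) : Prop :=
  ∀ g ∈ s, g ∉ Subgroup.closure ((s : Set G) \ {g})

/-- `mRank G` : maximal size of an irredundant generating set of `G`. -/
noncomputable def mRank (G : Type*) [Group G] : ℕ :=
  sSup {n | ∃ s : Finset G, Irredundant s ∧ Subgroup.closure (s : Set G) = ⊤ ∧ s.card = n}

/-- `iRank G` : maximal size of an irredundant subset of `G`. -/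
noncomputable def iRank (G : Type*) [Group G] : ℕ :=
  sSup {n | ∃ s : Finset G, Irredundant s ∧ s.card = n}

/-- A family of subgroups is in general position. -/
def GenPos {G : Type*} [Group G] {ι : Type*} (H : ι → Subgroup G) : Prop :=
  ∀ I J : Finset ι, I ⊂ J → (⨅ j ∈ J, H j) < (⨅ i ∈ I, H i)

/-- Maximal size of a family of maximal subgroups in general position. -/
noncomputable def MaxDim (G : Type*) [Group G] : ℕ :=
  sSup {k | ∃ M : Fin k → Subgroup G, (∀ j, IsCoatom (M j)) ∧ GenPos M}

section Aux

variable {G : Type*} [Group G]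

/-- Every finset contains an irredundant subset with the same closure. -/
lemma exists_irred_subset (s : Finset G) :
    ∃ t ⊆ s, Irredundant t ∧ Subgroup.closure (t : Set G) = Subgroup.closure (s : Set G) := by
  classical
  induction s using Finset.strongInductionOn with
  | _ s ih =>
    by_cases hs : Irredundant s
    · exact ⟨s, Finset.Subset.refl s, hs, rfl⟩
    · unfold Irredundant at hs
      push_neg at hs
      obtain ⟨g, hg, hmem⟩ := hs
      obtain ⟨t, hts, hti, htc⟩ := ih (s.erase g) (Finset.erase_ssubset hg)
      refine ⟨t, hts.trans (Finset.erase_subset g s), hti, ?_⟩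
      rw [htc, Finset.coe_erase]
      refine le_antisymm (Subgroup.closure_mono Set.diff_subset) ?_
      rw [Subgroup.closure_le]
      intro x hx
      by_cases hxg : x = g
      · subst hxg; exact hmem
      · exact Subgroup.subset_closure ⟨hx, by simpa using hxg⟩

lemma bdd_i [Finite G] : BddAbove {n | ∃ s : Finset G, Irredundant s ∧ s.card = n} := by
  have := Fintype.ofFinite G
  exact ⟨Fintype.card G, by rintro n ⟨s, -, rfl⟩; exact s.card_le_univ⟩

lemma bdd_m [Finite G] : BddAbove {n | ∃ s : Finset G, Irredundant s ∧
    Subgroup.closure (s : Set G) = ⊤ ∧ s.card = n} := by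
  have := Fintype.ofFinite G
  exact ⟨Fintype.card G, by rintro n ⟨s, -, -, rfl⟩; exact s.card_le_univ⟩

lemma nonempty_m [Finite G] : Set.Nonempty {n | ∃ s : Finset G, Irredundant s ∧
    Subgroup.closure (s : Set G) = ⊤ ∧ s.card = n} := by
  have := Fintype.ofFinite G
  obtain ⟨t, -, hti, htc⟩ := exists_irred_subset (Finset.univ : Finset G)
  rw [Finset.coe_univ, Subgroup.closure_univ] at htc
  exact ⟨t.card, t, hti, htc, rfl⟩

variable (H : Subgroup G)

lemma coe_map_closure (t : Finset H) :
    Subgroup.closure (((t.map (Function.Embedding.subtype (· ∈ H)) : Finset G)) : Set G)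
      = Subgroup.map H.subtype (Subgroup.closure (t : Set H)) := by
  rw [MonoidHom.map_closure, Finset.coe_map]
  rfl

lemma mem_closure_diff_iff (t : Finset H) (g : H) :
    (g : G) ∈ Subgroup.closure (((t.map (Function.Embedding.subtype (· ∈ H)) : Finset G) : Set G)
        \ {(g : G)})
      ↔ g ∈ Subgroup.closure ((t : Set H) \ {g}) := by
  have h1 : ((t.map (Function.Embedding.subtype (· ∈ H)) : Finset G) : Set G) \ {(g : G)}
      = ⇑H.subtype '' ((t : Set H) \ {g}) := by
    rw [Set.image_diff (Subgroup.subtype_injective H), Set.image_singleton, Finset.coe_map]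
    rfl
  rw [h1, ← MonoidHom.map_closure]
  exact Subgroup.mem_map_iff_mem (Subgroup.subtype_injective H)

lemma irred_map_iff (t : Finset H) :
    Irredundant (t.map (Function.Embedding.subtype (· ∈ H))) ↔ Irredundant t := by
  constructor
  · intro h g hg
    have := h (g : G) (Finset.mem_map_of_mem _ hg)
    rw [mem_closure_diff_iff] at this
    exact this
  · intro h x hx
    obtain ⟨g, hg, rfl⟩ := Finset.mem_map.1 hx
    exact fun hc => h g hg ((mem_closure_diff_iff H t g).1 hc)

lemma lift_irred {s : Finset G} {H : Subgroup G} (hsub : ∀ x ∈ s, x ∈ H)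
    (hi : Irredundant s) (hcl : Subgroup.closure (s : Set G) = H) :
    ∃ t : Finset H, Irredundant t ∧ Subgroup.closure (t : Set H) = ⊤ ∧ t.card = s.card := by
  classical
  set t := s.subtype (· ∈ H) with ht
  have hmap : t.map (Function.Embedding.subtype (· ∈ H)) = s := by
    rw [ht, Finset.subtype_map, Finset.filter_true_of_mem hsub]
  refine ⟨t, ?_, ?_, ?_⟩
  · rw [← irred_map_iff H, hmap]; exact hi
  · apply Subgroup.map_injective (Subgroup.subtype_injective H)
    rw [← coe_map_closure, hmap, hcl, ← MonoidHom.range_eq_map, Subgroup.subtype_range]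
  · rw [← Finset.card_map (Function.Embedding.subtype (· ∈ H)), hmap]

end Aux

theorem stmt12 {G : Type*} [Group G] [Finite G] :
    (mRank G = iRank G ∧ ∀ s : Finset G, Irredundant s → s.card = mRank G →
      Subgroup.closure (s : Set G) = ⊤)
    ↔ ∀ H : Subgroup G, H ≠ ⊤ → mRank H < mRank G := by
  classical
  constructor
  · rintro ⟨hflat, hstrong⟩ H hH
    by_contra hlt
    push_neg at hlt
    obtain ⟨t, hti, htc, htcard⟩ :=
      Nat.sSup_mem (nonempty_m (G := H)) (bdd_m (G := H))
    set u := t.map (Function.Embedding.subtype (· ∈ H)) with hu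
    have hui : Irredundant u := (irred_map_iff H t).2 hti
    have hucl : Subgroup.closure (u : Set G) = H := by
      rw [hu, coe_map_closure, htc, ← MonoidHom.range_eq_map, Subgroup.subtype_range]
    have hcard : u.card = t.card := Finset.card_map _
    have h1 : u.card ≤ mRank G := by
      rw [hflat]
      exact le_csSup bdd_i ⟨u, hui, rfl⟩
    have h2 : mRank G ≤ u.card := by rw [hcard, htcard]; exact hlt
    have h3 := hstrong u hui (le_antisymm h1 h2)
    rw [hucl] at h3
    exact hH h3
  · intro hH
    have step : ∀ s : Finset G, Irredundant s → Subgroup.closure (s : Set G) ≠ ⊤ →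
        s.card < mRank G := by
      intro s hi hne'
      obtain ⟨t, hti, htc, htcard⟩ :=
        lift_irred (H := Subgroup.closure (s : Set G))
          (fun x hx => Subgroup.subset_closure hx) hi rfl
      have h1 : s.card ≤ mRank (Subgroup.closure (s : Set G)) := by
        rw [← htcard]
        exact le_csSup (bdd_m (G := Subgroup.closure (s : Set G))) ⟨t, hti, htc, rfl⟩
      exact lt_of_le_of_lt h1 (hH _ hne')
    have hmi : mRank G = iRank G := by
      refine le_antisymm (csSup_le_csSup bdd_i nonempty_m ?_) (csSup_le ?_ ?_)
      · rintro n ⟨s, hi, -, rfl⟩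
        exact ⟨s, hi, rfl⟩
      · exact ⟨0, ∅, fun g hg => by simp at hg, rfl⟩
      · rintro n ⟨s, hi, rfl⟩
        by_cases h : Subgroup.closure (s : Set G) = ⊤
        · exact le_csSup bdd_m ⟨s, hi, h, rfl⟩
        · exact (step s hi h).le
    refine ⟨hmi, ?_⟩
    intro s hi hcard
    by_contra hne'
    have := step s hi hne'
    omega
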